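/- Let S be a commutative ring in which 2 is a nonzerodivisor, let ū ∈ S[[u]] be a power series with zero constant term satisfying ū ≡ −u mod (u²), and let σ : S[[u]] → S[[u]] be the S-algebra endomorphism given by substituting u ↦ ū; assume σ is an involution, i.e. σ(ū) = u. Let S[[w]] denote the image of the substitution homomorphism S[[t]] → S[[u]] sending t to w := u·ū, and let ξ ∈ S[[t]] be the unique power series with ξ(u·ū) = u + ū. Then the set {g + σ(g) : g ∈ S[[u]]} equals the ideal of the ring S[[w]] generated by 2 and ξ(w); consequently the quotient of the fixed subring {f ∈ S[[u]] : σ(f) = f} = S[[w]] by this set of norms is isomorphic to S[[t]]/(2, ξ(t)). -/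

import Mathlib

open PowerSeries

/-- Substitution of the power series `w` (with zero constant term) into the power
series `f`: the coefficient of `u^n` in `f(w)` is `∑_{k ≤ n} f_k · (w^k)_n`,
which is the usual composition of formal power series. -/
noncomputable def PowerSeries.substInto {S : Type*} [CommRing S] (w f : PowerSeries S) :
    PowerSeries S :=
  PowerSeries.mk fun n =>
    ∑ k ∈ Finset.range (n + 1), PowerSeries.coeff k f * PowerSeries.coeff n (w ^ k)

namespace SubstAux

variable {S : Type*} [CommRing S]

theorem coeff_substInto (w f : PowerSeries S) (n : ℕ) :
    coeff n (substInto w f) =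
      ∑ k ∈ Finset.range (n + 1), coeff k f * coeff n (w ^ k) := by
  simp [PowerSeries.substInto]

theorem coeff_pow_eq_zero {w : PowerSeries S} (hw : constantCoeff w = 0)
    {n k : ℕ} (h : n < k) : coeff n (w ^ k) = 0 := by
  have hd : (X : PowerSeries S) ^ k ∣ w ^ k := pow_dvd_pow_of_dvd (X_dvd_iff.mpr hw) k
  exact X_pow_dvd_iff.mp hd n h

theorem coeff_substInto_congr {w f g : PowerSeries S} {n : ℕ}
    (h : ∀ m ≤ n, coeff m f = coeff m g) :
    coeff n (substInto w f) = coeff n (substInto w g) := by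
  rw [coeff_substInto, coeff_substInto]
  refine Finset.sum_congr rfl fun k hk => ?_
  rw [h k (Nat.lt_succ_iff.mp (Finset.mem_range.mp hk))]

theorem constantCoeff_substInto (w f : PowerSeries S) :
    constantCoeff (substInto w f) = constantCoeff f := by
  rw [← coeff_zero_eq_constantCoeff_apply, coeff_substInto]
  simp

theorem substInto_C (w : PowerSeries S) (s : S) :
    substInto w (C s) = C s := by
  ext n
  rw [coeff_substInto, Finset.sum_eq_single 0]
  · simp [coeff_C, coeff_one]
  · intro k _ hk
    simp [coeff_C, hk]
  · simp

theorem substInto_add (w f g : PowerSeries S) :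
    substInto w (f + g) = substInto w f + substInto w g := by
  ext n
  simp [coeff_substInto, add_mul, Finset.sum_add_distrib]

theorem substInto_C_mul (w f : PowerSeries S) (s : S) :
    substInto w (C s * f) = C s * substInto w f := by
  ext n
  simp [coeff_substInto, coeff_C_mul, Finset.mul_sum, mul_assoc]

theorem substInto_X_pow {w : PowerSeries S} (hw : constantCoeff w = 0) (k : ℕ) :
    substInto w ((X : PowerSeries S) ^ k) = w ^ k := by
  ext n
  rw [coeff_substInto]
  by_cases hkn : k ≤ n
  · rw [Finset.sum_eq_single k]
    · simp [coeff_X_pow]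
    · intro j _ hj
      simp [coeff_X_pow, hj]
    · intro h
      exact absurd (Finset.mem_range.mpr (Nat.lt_succ_of_le hkn)) h
  · push_neg at hkn
    rw [Finset.sum_eq_zero, coeff_pow_eq_zero hw hkn]
    intro j hj
    have hjk : j ≠ k := by
      have := Finset.mem_range.mp hj; omega
    simp [coeff_X_pow, hjk]

theorem monomial_eq (k : ℕ) (s : S) :
    (monomial k s : PowerSeries S) = C s * X ^ k := by
  ext n
  simp [coeff_monomial, coeff_C_mul, coeff_X_pow]

theorem substInto_coe_poly {w : PowerSeries S} (hw : constantCoeff w = 0)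
    (p : Polynomial S) : substInto w (p : PowerSeries S) = Polynomial.aeval w p := by
  induction p using Polynomial.induction_on' with
  | add p q hp hq =>
    rw [Polynomial.coe_add, substInto_add, hp, hq, map_add]
  | monomial k s =>
    rw [Polynomial.coe_monomial, monomial_eq, substInto_C_mul, substInto_X_pow hw,
      Polynomial.aeval_monomial]
    rfl

theorem coeff_substInto_trunc {w : PowerSeries S} (hw : constantCoeff w = 0)
    (f : PowerSeries S) {n N : ℕ} (h : n < N) :
    coeff n (substInto w f) = coeff n (Polynomial.aeval w (f.trunc N)) := by
  rw [← substInto_coe_poly hw]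
  refine coeff_substInto_congr fun m hm => ?_
  rw [Polynomial.coeff_coe, coeff_trunc, if_pos (lt_of_le_of_lt hm h)]

theorem coeff_aeval_congr {w : PowerSeries S} (hw : constantCoeff w = 0)
    {p q : Polynomial S} {n N : ℕ} (h : n < N)
    (hpq : ∀ m < N, p.coeff m = q.coeff m) :
    coeff n (Polynomial.aeval w p) = coeff n (Polynomial.aeval w q) := by
  rw [← substInto_coe_poly hw, ← substInto_coe_poly hw]
  refine coeff_substInto_congr fun m hm => ?_
  rw [Polynomial.coeff_coe, Polynomial.coeff_coe, hpq m (lt_of_le_of_lt hm h)]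

theorem substInto_mul {w : PowerSeries S} (hw : constantCoeff w = 0)
    (f g : PowerSeries S) :
    substInto w (f * g) = substInto w f * substInto w g := by
  ext n
  have key : ∀ m < n + 1, ((f * g).trunc (n + 1)).coeff m =
      (f.trunc (n + 1) * g.trunc (n + 1)).coeff m := by
    intro m hm
    rw [Polynomial.coeff_mul, coeff_trunc, if_pos hm, PowerSeries.coeff_mul]
    refine Finset.sum_congr rfl fun x hx => ?_
    obtain ⟨h1, h2⟩ := Finset.HasAntidiagonal.antidiagonal.fst_le hx, Finset.HasAntidiagonal.antidiagonal.snd_le hx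
    rw [coeff_trunc, coeff_trunc, if_pos (by omega), if_pos (by omega)]
  calc coeff n (substInto w (f * g))
      = coeff n (Polynomial.aeval w ((f * g).trunc (n + 1))) :=
        coeff_substInto_trunc hw _ (Nat.lt_succ_self n)
    _ = coeff n (Polynomial.aeval w (f.trunc (n + 1) * g.trunc (n + 1))) :=
        coeff_aeval_congr hw (Nat.lt_succ_self n) key
    _ = coeff n (Polynomial.aeval w (f.trunc (n + 1)) *
          Polynomial.aeval w (g.trunc (n + 1))) := by rw [map_mul]
    _ = coeff n (substInto w f * substInto w g) := by
        rw [PowerSeries.coeff_mul, PowerSeries.coeff_mul]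
        refine Finset.sum_congr rfl fun x hx => ?_
        have h1 := Finset.HasAntidiagonal.antidiagonal.fst_le hx
        have h2 := Finset.HasAntidiagonal.antidiagonal.snd_le hx
        rw [← coeff_substInto_trunc hw f (by omega), ← coeff_substInto_trunc hw g (by omega)]

theorem substInto_one (w : PowerSeries S) : substInto w (1 : PowerSeries S) = 1 := by
  simpa using substInto_C w 1

theorem substInto_pow {w : PowerSeries S} (hw : constantCoeff w = 0)
    (f : PowerSeries S) (k : ℕ) :
    substInto w (f ^ k) = substInto w f ^ k := by
  induction k with
  | zero => simpa using substInto_one w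
  | succ k ih => rw [pow_succ, substInto_mul hw, ih, pow_succ]

theorem substInto_substInto {w₂ w₁ : PowerSeries S}
    (hw₂ : constantCoeff w₂ = 0) (hw₁ : constantCoeff w₁ = 0) (f : PowerSeries S) :
    substInto w₂ (substInto w₁ f) = substInto (substInto w₂ w₁) f := by
  have hw' : constantCoeff (substInto w₂ w₁) = 0 := by
    rw [constantCoeff_substInto, hw₁]
  ext n
  have step1 : coeff n (substInto w₂ (substInto w₁ f)) =
      coeff n (substInto w₂ (substInto w₁ ((f.trunc (n+1) : Polynomial S) : PowerSeries S))) := by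
    refine coeff_substInto_congr fun m hm => ?_
    refine coeff_substInto_congr fun m' hm' => ?_
    rw [Polynomial.coeff_coe, coeff_trunc, if_pos (by omega)]
  have step2 : ∀ p : Polynomial S,
      substInto w₂ (substInto w₁ ((p : PowerSeries S))) =
        substInto (substInto w₂ w₁) (p : PowerSeries S) := by
    intro p
    induction p using Polynomial.induction_on' with
    | add p q hp hq => rw [Polynomial.coe_add, substInto_add, substInto_add, hp, hq,
        substInto_add]
    | monomial k s =>
        rw [Polynomial.coe_monomial, monomial_eq, substInto_C_mul, substInto_X_pow hw₁,
          substInto_C_mul, substInto_pow hw₂,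
          substInto_C_mul, substInto_X_pow hw']
  rw [step1, step2]
  refine coeff_substInto_congr fun m hm => ?_
  rw [Polynomial.coeff_coe, coeff_trunc, if_pos (by omega)]

noncomputable def shift2 (g : PowerSeries S) : PowerSeries S := mk fun n => coeff (n + 2) g

theorem X_sq_mul_shift2 {g : PowerSeries S} (h0 : coeff 0 g = 0) (h1 : coeff 1 g = 0) :
    (X : PowerSeries S) ^ 2 * shift2 g = g := by
  ext n
  rw [coeff_X_pow_mul']
  rcases n with _ | _ | m
  · simpa using h0.symm
  · simpa using h1.symm
  · rw [if_pos (by omega)]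
    simp [shift2]

theorem W_eq (W : PowerSeries S) (h0 : coeff 0 W = 0) (h1 : coeff 1 W = 0) :
    W = X ^ 2 * shift2 W := (X_sq_mul_shift2 h0 h1).symm

theorem coeff_two_mul_n_pow {W : PowerSeries S} (h0 : coeff 0 W = 0)
    (h1 : coeff 1 W = 0) (n : ℕ) :
    coeff (2 * n) (W ^ n) = (coeff 2 W) ^ n := by
  conv_lhs => rw [W_eq W h0 h1, mul_pow, ← pow_mul]
  rw [coeff_X_pow_mul', if_pos le_rfl, Nat.sub_self]
  have h1' : coeff 0 (shift2 W ^ n) = (constantCoeff (shift2 W)) ^ n := by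
    rw [coeff_zero_eq_constantCoeff, map_pow]
  have h2' : constantCoeff (shift2 W) = coeff 2 W := by
    rw [← coeff_zero_eq_constantCoeff_apply]
    simp [shift2]
  rw [h1', h2']

theorem coeff_pow_eq_zero_of_sq {W : PowerSeries S} (h0 : coeff 0 W = 0)
    (h1 : coeff 1 W = 0) {n k : ℕ} (h : n < 2 * k) : coeff n (W ^ k) = 0 := by
  have hd : (X : PowerSeries S) ^ (2 * k) ∣ W ^ k := by
    rw [W_eq W h0 h1, mul_pow, ← pow_mul]
    exact Dvd.intro _ rfl
  exact X_pow_dvd_iff.mp hd n h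

theorem substInto_inj {W : PowerSeries S} (h0 : coeff 0 W = 0)
    (h1 : coeff 1 W = 0) (hu : IsUnit (coeff 2 W)) {c : PowerSeries S}
    (hc : substInto W c = 0) : c = 0 := by
  by_contra hne
  have hex : ∃ n, coeff n c ≠ 0 := by
    by_contra h
    push_neg at h
    exact hne (by ext n; simpa using h n)
  classical
  set n := Nat.find hex with hn
  have hmin : ∀ m < n, coeff m c = 0 := by
    intro m hm
    by_contra h
    exact absurd (Nat.find_le h) (not_le.mpr hm)
  have hnne : coeff n c ≠ 0 := Nat.find_spec hex
  have h2n : coeff (2 * n) (substInto W c) = 0 := by rw [hc]; simp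
  rw [coeff_substInto, Finset.sum_eq_single n] at h2n
  · rw [coeff_two_mul_n_pow h0 h1] at h2n
    exact hnne (((hu.pow n).mul_left_eq_zero).mp h2n)
  · intro k hk hkn
    rcases lt_or_gt_of_ne hkn with h' | h'
    · rw [hmin k h', zero_mul]
    · rw [coeff_pow_eq_zero_of_sq h0 h1 (by omega), mul_zero]
  · intro h
    exact absurd (Finset.mem_range.mpr (by omega)) h

section Decomp

variable (Vinv : PowerSeries S)

noncomputable def seqF (f : PowerSeries S) : ℕ → PowerSeries S
  | 0 => f
  | k + 1 =>
      shift2 (seqF f k - C (coeff 0 (seqF f k)) - C (coeff 1 (seqF f k)) * X) * Vinv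

theorem invariant {W : PowerSeries S} (h0 : coeff 0 W = 0) (h1 : coeff 1 W = 0)
    (hVV : shift2 W * Vinv = 1) (f : PowerSeries S) (N : ℕ) :
    f = (∑ k ∈ Finset.range N,
        (C (coeff 0 (seqF Vinv f k)) + C (coeff 1 (seqF Vinv f k)) * X) * W ^ k)
      + W ^ N * seqF Vinv f N := by
  induction N with
  | zero => simp [seqF]
  | succ N ih =>
    have key : W * seqF Vinv f (N + 1) =
        seqF Vinv f N - C (coeff 0 (seqF Vinv f N))
          - C (coeff 1 (seqF Vinv f N)) * X := by
      set G := seqF Vinv f N - C (coeff 0 (seqF Vinv f N))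
          - C (coeff 1 (seqF Vinv f N)) * X with hG
      have hG0 : coeff 0 G = 0 := by simp [hG, coeff_C_mul]
      have hG1 : coeff 1 G = 0 := by simp [hG, coeff_C_mul, coeff_C]
      calc W * (shift2 G * Vinv) = X ^ 2 * shift2 G * (shift2 W * Vinv) := by
            conv_lhs => rw [W_eq W h0 h1]
            ring
        _ = G := by rw [hVV, mul_one, X_sq_mul_shift2 hG0 hG1]
    rw [Finset.sum_range_succ]
    have h3 : W ^ (N + 1) * seqF Vinv f (N + 1) = W ^ N * (W * seqF Vinv f (N + 1)) := by ring
    rw [h3, key]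
    conv_lhs => rw [ih]
    ring

theorem exists_decomp {W : PowerSeries S} (h0 : coeff 0 W = 0)
    (h1 : coeff 1 W = 0) (hu : IsUnit (coeff 2 W)) (f : PowerSeries S) :
    ∃ a b : PowerSeries S, f = substInto W a + X * substInto W b := by
  obtain ⟨u, hu⟩ := hu
  have hV : constantCoeff (shift2 W) = u := by
    rw [hu, ← coeff_zero_eq_constantCoeff_apply]
    simp [shift2]
  set Vinv := invOfUnit (shift2 W) u with hVinv
  have hVV : shift2 W * Vinv = 1 := mul_invOfUnit _ u hV
  set a : ℕ → S := fun k => coeff 0 (seqF Vinv f k) with ha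
  set b : ℕ → S := fun k => coeff 1 (seqF Vinv f k) with hb
  refine ⟨mk a, mk b, ?_⟩
  have hWc : constantCoeff W = 0 := by rw [← coeff_zero_eq_constantCoeff_apply]; exact h0
  ext n
  have hinv := invariant Vinv h0 h1 hVV f (n + 1)
  have htail : coeff n (W ^ (n + 1) * seqF Vinv f (n + 1)) = 0 := by
    have hd : (X : PowerSeries S) ^ (n + 1) ∣ W ^ (n + 1) * seqF Vinv f (n + 1) :=
      dvd_mul_of_dvd_left (pow_dvd_pow_of_dvd (X_dvd_iff.mpr hWc) _) _
    exact X_pow_dvd_iff.mp hd n (Nat.lt_succ_self n)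
  have hsum : coeff n f = ∑ k ∈ Finset.range (n + 1),
      (a k * coeff n (W ^ k) + b k * coeff n (X * W ^ k)) := by
    conv_lhs => rw [hinv]
    rw [map_add, htail, add_zero, map_sum]
    refine Finset.sum_congr rfl fun k _ => ?_
    rw [add_mul, map_add, coeff_C_mul]
    congr 1
    rw [mul_assoc, coeff_C_mul]
  rw [hsum, Finset.sum_add_distrib, map_add]
  congr 1
  · rw [coeff_substInto]
    refine Finset.sum_congr rfl fun k _ => ?_
    rw [coeff_mk]
  · rcases n with _ | m
    · simp
    · simp only [coeff_succ_X_mul, coeff_substInto, coeff_mk]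
      rw [Finset.sum_range_succ, coeff_pow_eq_zero hWc (Nat.lt_succ_self m), mul_zero, add_zero]

end Decomp

theorem substInto_X {w : PowerSeries S} (hw : constantCoeff w = 0) :
    substInto w (X : PowerSeries S) = w := by
  simpa using substInto_X_pow hw 1

theorem substInto_two (w : PowerSeries S) : substInto w (2 : PowerSeries S) = 2 := by
  rw [← one_add_one_eq_two, substInto_add, substInto_one, one_add_one_eq_two]

theorem substInto_sub (w f g : PowerSeries S) :
    substInto w (f - g) = substInto w f - substInto w g := by
  ext n
  simp [coeff_substInto, sub_mul, Finset.sum_sub_distrib]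

end SubstAux


open SubstAux

/-- The set of norms `{g + σ(g)}` equals the ideal of the subring
`S[[w]] = {a(w) : a ∈ S[[t]]}` generated by `2` and `ξ(w)` (whose elements are
exactly `2·a(w) + ξ(w)·b(w)`), and consequently the quotient of the fixed ring
`S[[w]]` by the norms corresponds, under the isomorphism `S[[t]] ≅ S[[w]]`,
`g ↦ g(w)`, to `S[[t]]/(2, ξ(t))`: the preimage of the norms is exactly the
ideal `(2, ξ)` of `S[[t]]`. -/
theorem norms_eq_ideal_two_xi
    {S : Type*} [CommRing S] (h2 : (2 : S) ∈ nonZeroDivisors S)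
    (ubar : PowerSeries S) (h0 : PowerSeries.constantCoeff ubar = 0)
    (hcong : ubar + PowerSeries.X ∈ Ideal.span {(PowerSeries.X : PowerSeries S) ^ 2})
    (hinv : PowerSeries.substInto ubar ubar = PowerSeries.X)
    (ξ : PowerSeries S)
    (hξ : PowerSeries.substInto (PowerSeries.X * ubar) ξ = PowerSeries.X + ubar) :
    ({f : PowerSeries S | ∃ g : PowerSeries S, f = g + PowerSeries.substInto ubar g} =
      {f : PowerSeries S | ∃ a b : PowerSeries S,
        f = 2 * PowerSeries.substInto (PowerSeries.X * ubar) a +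
          PowerSeries.substInto (PowerSeries.X * ubar) ξ *
            PowerSeries.substInto (PowerSeries.X * ubar) b}) ∧
    ∀ g : PowerSeries S,
      (∃ h : PowerSeries S,
        PowerSeries.substInto (PowerSeries.X * ubar) g = h + PowerSeries.substInto ubar h) ↔
        g ∈ Ideal.span {(2 : PowerSeries S), ξ} := by
  set W : PowerSeries S := X * ubar with hWdef
  have hW0 : constantCoeff W = 0 := by simp [hWdef]
  have hWc0 : coeff 0 W = 0 := by rw [coeff_zero_eq_constantCoeff_apply]; exact hW0
  have hWc1 : coeff 1 W = 0 := by
    rw [hWdef]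
    rw [show (1 : ℕ) = 0 + 1 from rfl, coeff_succ_X_mul, coeff_zero_eq_constantCoeff_apply]
    exact h0
  have hub1 : coeff 1 ubar = -1 := by
    obtain ⟨q, hq⟩ := Ideal.mem_span_singleton'.mp hcong
    have : coeff 1 (ubar + X) = 0 := by
      rw [← hq]
      have hd : (X : PowerSeries S) ^ 2 ∣ q * X ^ 2 := dvd_mul_left _ _
      exact X_pow_dvd_iff.mp hd 1 (by omega)
    have h1X : coeff 1 (X : PowerSeries S) = 1 := coeff_one_X
    rw [map_add, h1X] at this
    linear_combination this
  have hWc2 : coeff 2 W = -1 := by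
    rw [hWdef, show (2 : ℕ) = 1 + 1 from rfl, coeff_succ_X_mul, hub1]
  have hu : IsUnit (coeff 2 W) := by rw [hWc2]; exact (isUnit_one).neg
  have hWfix : substInto ubar W = W := by
    rw [hWdef, substInto_mul h0, substInto_X h0, hinv, mul_comm]
  have hfix : ∀ a : PowerSeries S, substInto ubar (substInto W a) = substInto W a := by
    intro a
    rw [substInto_substInto h0 hW0, hWfix]
  have comp : ∀ a b : PowerSeries S,
      (substInto W a + X * substInto W b) +
        substInto ubar (substInto W a + X * substInto W b) =
      2 * substInto W a + substInto W ξ * substInto W b := by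
    intro a b
    rw [substInto_add, hfix a, substInto_mul h0, substInto_X h0, hfix b, hξ]
    ring
  have hWsubst : ∀ p : PowerSeries S, substInto W (2 * p) = 2 * substInto W p := by
    intro p
    rw [substInto_mul hW0, substInto_two]
  constructor
  · ext f
    constructor
    · rintro ⟨g, rfl⟩
      obtain ⟨a, b, hab⟩ := exists_decomp hWc0 hWc1 hu g
      exact ⟨a, b, by rw [hab, comp a b]⟩
    · rintro ⟨a, b, rfl⟩
      exact ⟨substInto W a + X * substInto W b, (comp a b).symm⟩
  · intro g
    constructor
    · rintro ⟨h, hh⟩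
      obtain ⟨a, b, hab⟩ := exists_decomp hWc0 hWc1 hu h
      have key : substInto W g = substInto W (2 * a + ξ * b) := by
        rw [hh, hab, comp a b, substInto_add, hWsubst, substInto_mul hW0]
      have : g = 2 * a + ξ * b := by
        have hz : substInto W (g - (2 * a + ξ * b)) = 0 := by
          rw [substInto_sub, key, sub_self]
        have := substInto_inj hWc0 hWc1 hu hz
        linear_combination this
      rw [this]
      exact Ideal.mem_span_pair.mpr ⟨a, b, by ring⟩
    · intro hg
      obtain ⟨x, y, hxy⟩ := Ideal.mem_span_pair.mp hg
      refine ⟨substInto W x + X * substInto W y, ?_⟩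
      rw [comp x y, ← hxy, substInto_add, substInto_mul hW0, substInto_mul hW0, substInto_two]
      ring
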